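/- Let b ≥ 3 and W ⊊ {0,1,…,b−1} with |W| ≥ 2, Δ = log|W|/log b. For any finite set S = {q_1,…,q_v} of primes none of which divides b, there are only finitely many rational numbers r/s ∈ C_{b,W} (in lowest terms) such that every prime factor of s lies in S. -/

import Mathlib

open Finset


lemma cc14_dvd_iff {s b : ℕ} (hb : 0 < b) (m : ℕ) :
    s ∣ b ^ m - 1 ↔ (b : ZMod s) ^ m = 1 := by
  have h1 : 1 ≤ b ^ m := Nat.one_le_pow _ _ hb
  rw [← ZMod.natCast_eq_zero_iff, Nat.cast_sub h1]
  push_cast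
  rw [sub_eq_zero]

lemma cc14_val_bound {q b : ℕ} (hq : q.Prime) (hqb : ¬ q ∣ b) (hb : 2 ≤ b) :
    ∃ c : ℕ, ∀ t : ℕ, t ≠ 0 → padicValNat q (b ^ t - 1) ≤ c + padicValNat q t := by
  haveI : Fact q.Prime := ⟨hq⟩
  have hbt : ∀ t : ℕ, t ≠ 0 → b ^ t - 1 ≠ 0 := by
    intro t ht
    have : 2 ≤ b ^ t := le_trans hb (Nat.le_self_pow ht b)
    omega
  have hmono : ∀ m n : ℕ, m ≠ 0 → m ∣ n → n ≠ 0 →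
      padicValNat q m ≤ padicValNat q n := by
    intro m n hm hmn hn
    rw [← padicValNat_dvd_iff_le hn]
    exact dvd_trans pow_padicValNat_dvd hmn
  rcases eq_or_ne q 2 with rfl | hq2
  · refine ⟨padicValNat 2 (b + 1) + padicValNat 2 (b - 1), fun t ht => ?_⟩
    have key : padicValNat 2 (b ^ (2 * t) - 1 ^ (2 * t)) + 1 =
        padicValNat 2 (b + 1) + padicValNat 2 (b - 1) + padicValNat 2 (2 * t) := by
      refine padicValNat.pow_two_sub_pow (by omega) (by omega) hqb (by omega) (even_two_mul t)
    have h2t : padicValNat 2 (2 * t) = 1 + padicValNat 2 t := by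
      rw [padicValNat.mul (by omega) ht, padicValNat.self (by omega)]
    rw [one_pow, h2t] at key
    have hle : padicValNat 2 (b ^ t - 1) ≤ padicValNat 2 (b ^ (2 * t) - 1) := by
      refine hmono _ _ (hbt t ht) ?_ (hbt _ (by omega))
      have h2 : b ^ (2 * t) = (b ^ t) ^ 2 := by rw [← pow_mul, mul_comm]
      rw [h2]
      simpa using Nat.sub_dvd_pow_sub_pow (b ^ t) 1 2
    omega
  · have hq1 : Odd q := hq.odd_of_ne_two hq2
    have hcop : Nat.Coprime b q := Nat.coprime_comm.mp (hq.coprime_iff_not_dvd.mpr hqb)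
    haveI : NeZero q := ⟨hq.pos.ne'⟩
    set u := ZMod.unitOfCoprime b hcop with hu
    set d := orderOf u with hd
    have hd0 : 0 < d := orderOf_pos u
    have hbd1 : (b : ZMod q) ^ d = 1 := by
      have := pow_orderOf_eq_one u
      rw [← hd] at this
      calc (b : ZMod q) ^ d = ((u ^ d : (ZMod q)ˣ) : ZMod q) := by
            rw [Units.val_pow_eq_pow_val, ZMod.coe_unitOfCoprime]
        _ = 1 := by rw [this, Units.val_one]
    refine ⟨padicValNat q (b ^ d - 1), fun t ht => ?_⟩
    by_cases hqd : q ∣ b ^ t - 1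
    · have hbt1 : (b : ZMod q) ^ t = 1 := (cc14_dvd_iff (by omega) t).mp hqd
      have hut : u ^ t = 1 := by
        ext
        rw [Units.val_pow_eq_pow_val, ZMod.coe_unitOfCoprime, hbt1, Units.val_one]
      have hdt : d ∣ t := orderOf_dvd_of_pow_eq_one hut
      obtain ⟨m, rfl⟩ := hdt
      have hm : m ≠ 0 := by rintro rfl; simp at ht
      have key : padicValNat q ((b ^ d) ^ m - 1 ^ m) =
          padicValNat q (b ^ d - 1) + padicValNat q m := by
        refine padicValNat.pow_sub_pow hq1 ?_ ?_ ?_ hm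
        · exact Nat.one_lt_pow hd0.ne' (by omega)
        · exact (cc14_dvd_iff (show (0:ℕ) < b by omega) d).mpr hbd1
        · exact fun h => hqb (hq.dvd_of_dvd_pow h)
      rw [one_pow, ← pow_mul] at key
      have hmt : padicValNat q m ≤ padicValNat q (d * m) :=
        hmono m (d * m) hm (dvd_mul_left m d) ht
      omega
    · rw [padicValNat.eq_zero_of_not_dvd hqd]
      omega

lemma cc14_prod_pow_dvd (S : Finset ℕ) (hS : ∀ p ∈ S, Nat.Prime p) {t : ℕ} (ht : t ≠ 0) :
    (∏ q ∈ S, q ^ padicValNat q t) ∣ t := by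
  classical
  induction S using Finset.induction with
  | empty => simpa using Nat.one_dvd t
  | @insert p s hp ih =>
    rw [Finset.prod_insert hp]
    have hpprime : p.Prime := hS p (Finset.mem_insert_self p s)
    have hcop : Nat.Coprime (p ^ padicValNat p t) (∏ q ∈ s, q ^ padicValNat q t) := by
      apply Nat.Coprime.prod_right
      intro q hq
      have hqprime : q.Prime := hS q (Finset.mem_insert_of_mem hq)
      exact Nat.Coprime.pow _ _
        ((Nat.coprime_primes hpprime hqprime).mpr (by rintro rfl; exact hp hq))
    refine hcop.mul_dvd_of_dvd_of_dvd ?_ ?_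
    · haveI : Fact p.Prime := ⟨hpprime⟩
      exact pow_padicValNat_dvd
    · exact ih (fun q hq => hS q (Finset.mem_insert_of_mem hq))

lemma cc14_denom_le {b : ℕ} (hb : 2 ≤ b) (S : Finset ℕ)
    (hSp : ∀ p ∈ S, Nat.Prime p) (hSb : ∀ p ∈ S, ¬ p ∣ b) :
    ∃ A : ℕ, 0 < A ∧ ∀ s t : ℕ, s ≠ 0 → t ≠ 0 →
      (∀ p : ℕ, Nat.Prime p → p ∣ s → p ∈ S) → s ∣ b ^ t - 1 → s ≤ A * t := by
  classical
  have H : ∀ q : ℕ, ∃ c : ℕ, q ∈ S →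
      ∀ t : ℕ, t ≠ 0 → padicValNat q (b ^ t - 1) ≤ c + padicValNat q t := by
    intro q
    by_cases hq : q ∈ S
    · obtain ⟨c, hc⟩ := cc14_val_bound (hSp q hq) (hSb q hq) hb
      exact ⟨c, fun _ => hc⟩
    · exact ⟨0, fun h => absurd h hq⟩
  choose c hc using H
  refine ⟨∏ q ∈ S, q ^ c q, Finset.prod_pos (fun q hq => pow_pos (hSp q hq).pos _), ?_⟩
  intro s t hs ht hsS hsd
  have hbt : b ^ t - 1 ≠ 0 := by
    have : 2 ≤ b ^ t := le_trans hb (Nat.le_self_pow ht b)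
    omega
  have hsub : s.primeFactors ⊆ S := fun p hp =>
    hsS p (Nat.prime_of_mem_primeFactors hp) (Nat.dvd_of_mem_primeFactors hp)
  have h1 : ∏ q ∈ s.primeFactors, q ^ s.factorization q = s := by
    have := Nat.factorization_prod_pow_eq_self hs
    rwa [Finsupp.prod, Nat.support_factorization] at this
  have hs_eq : s = ∏ q ∈ S, q ^ s.factorization q := by
    conv_lhs => rw [← h1]
    refine Finset.prod_subset hsub ?_
    intro q _ hq
    have : s.factorization q = 0 := by
      by_contra h
      exact hq (Nat.support_factorization s ▸ Finsupp.mem_support_iff.mpr h)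
    rw [this, pow_zero]
  have hstep : s ≤ ∏ q ∈ S, q ^ (c q + padicValNat q t) := by
    rw [hs_eq]
    refine Finset.prod_le_prod' ?_
    intro q hq
    haveI : Fact q.Prime := ⟨hSp q hq⟩
    have hv : s.factorization q ≤ c q + padicValNat q t := by
      have h2 : s.factorization q = padicValNat q s := Nat.factorization_def s (hSp q hq)
      have h3 : padicValNat q s ≤ padicValNat q (b ^ t - 1) := by
        rw [← padicValNat_dvd_iff_le hbt]
        exact dvd_trans pow_padicValNat_dvd hsd
      have h4 := hc q hq t ht
      omega
    exact Nat.pow_le_pow_right (hSp q hq).pos hv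
  calc s ≤ ∏ q ∈ S, q ^ (c q + padicValNat q t) := hstep
    _ = (∏ q ∈ S, q ^ c q) * ∏ q ∈ S, q ^ padicValNat q t := by
        rw [← Finset.prod_mul_distrib]
        exact Finset.prod_congr rfl fun q _ => pow_add q _ _
    _ ≤ (∏ q ∈ S, q ^ c q) * t := by
        exact Nat.mul_le_mul_left _ (Nat.le_of_dvd (Nat.pos_of_ne_zero ht)
          (cc14_prod_pow_dvd S hSp ht))


section analysis
variable {b : ℕ}

lemma cc14_term_le (hb : 2 ≤ b) {w : ℕ → ℕ} (hw : ∀ j, w j ≤ b - 1) (j : ℕ) :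
    (w j : ℝ) / (b : ℝ) ^ (j + 1) ≤ ((b : ℝ) - 1) / (b : ℝ) ^ (j + 1) := by
  have h1 : (w j : ℝ) ≤ (b : ℝ) - 1 := by
    have := hw j
    have h2 : (w j : ℝ) ≤ ((b - 1 : ℕ) : ℝ) := by exact_mod_cast this
    rwa [Nat.cast_sub (by omega), Nat.cast_one] at h2
  have hb0 : (0:ℝ) ≤ (b:ℝ) ^ (j+1) := by positivity
  exact div_le_div_of_nonneg_right h1 hb0

lemma cc14_geo_summable (hb : 2 ≤ b) :
    Summable (fun j : ℕ => ((b : ℝ) - 1) / (b : ℝ) ^ (j + 1)) := by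
  have hb0 : (0:ℝ) < b := by exact_mod_cast (by omega : 0 < b)
  have h1 : Summable (fun j : ℕ => ((b:ℝ))⁻¹ ^ j) :=
    summable_geometric_of_lt_one (by positivity)
      (by rw [inv_lt_one_iff₀]; right; exact_mod_cast (by omega : 1 < b))
  have := h1.mul_left (((b:ℝ) - 1) / b)
  refine this.congr fun j => ?_
  have hp : (b:ℝ)^(j+1) = b * b^j := by ring
  rw [inv_pow, hp, ← div_div]
  ring

lemma cc14_summable (hb : 2 ≤ b) {w : ℕ → ℕ} (hw : ∀ j, w j ≤ b - 1) :
    Summable (fun j : ℕ => (w j : ℝ) / (b : ℝ) ^ (j + 1)) := by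
  refine Summable.of_nonneg_of_le (fun j => by positivity)
    (fun j => cc14_term_le hb hw j) (cc14_geo_summable hb)

lemma cc14_geo_tsum (hb : 2 ≤ b) :
    ∑' j : ℕ, ((b : ℝ) - 1) / (b : ℝ) ^ (j + 1) = 1 := by
  have hb0 : (0:ℝ) < b := by exact_mod_cast (by omega : 0 < b)
  have hb1 : (b:ℝ) ≠ 1 := by exact_mod_cast (by omega : b ≠ 1)
  have h1 : ∑' j : ℕ, ((b:ℝ))⁻¹ ^ j = (1 - (b:ℝ)⁻¹)⁻¹ :=
    tsum_geometric_of_lt_one (by positivity)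
      (by rw [inv_lt_one_iff₀]; right; exact_mod_cast (by omega : 1 < b))
  have h2 : ∀ j : ℕ, ((b : ℝ) - 1) / (b : ℝ) ^ (j + 1)
      = (((b:ℝ) - 1) / b) * ((b:ℝ))⁻¹ ^ j := by
    intro j
    have hp : (b:ℝ)^(j+1) = b * b^j := by ring
    rw [inv_pow, hp, ← div_div, div_eq_mul_inv]
  calc ∑' j : ℕ, ((b : ℝ) - 1) / (b : ℝ) ^ (j + 1)
      = ∑' j : ℕ, (((b:ℝ) - 1) / b) * ((b:ℝ))⁻¹ ^ j := by
        exact tsum_congr h2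
    _ = (((b:ℝ) - 1) / b) * (1 - (b:ℝ)⁻¹)⁻¹ := by rw [tsum_mul_left, h1]
    _ = 1 := by
        have hb1' : (b:ℝ) - 1 ≠ 0 := by
          have : (1:ℝ) < b := by exact_mod_cast (by omega : 1 < b)
          linarith
        field_simp

lemma cc14_tsum_nonneg {w : ℕ → ℕ} :
    0 ≤ ∑' j : ℕ, (w j : ℝ) / (b : ℝ) ^ (j + 1) :=
  tsum_nonneg (fun j => by positivity)

lemma cc14_tsum_le_one (hb : 2 ≤ b) {w : ℕ → ℕ} (hw : ∀ j, w j ≤ b - 1) :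
    ∑' j : ℕ, (w j : ℝ) / (b : ℝ) ^ (j + 1) ≤ 1 := by
  rw [← cc14_geo_tsum hb]
  exact (cc14_summable hb hw).tsum_le_tsum (fun j => cc14_term_le hb hw j)
    (cc14_geo_summable hb)

lemma cc14_split (hb : 2 ≤ b) {w : ℕ → ℕ} (hw : ∀ j, w j ≤ b - 1) (n : ℕ) :
    ∑' k : ℕ, (w k : ℝ) / (b : ℝ) ^ (k + 1)
      = (∑ k ∈ Finset.range n, (w k : ℝ) / (b : ℝ) ^ (k + 1))
        + ((b : ℝ) ^ n)⁻¹ * ∑' k : ℕ, (w (k + n) : ℝ) / (b : ℝ) ^ (k + 1) := by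
  have hs := cc14_summable hb hw
  rw [← hs.sum_add_tsum_nat_add n]
  congr 1
  rw [← tsum_mul_left]
  refine tsum_congr fun k => ?_
  have hp : (b:ℝ)^(k+n+1) = b^(k+1) * b^n := by ring
  rw [hp, ← div_div, div_eq_mul_inv, mul_comm]

end analysis

lemma cc14_finite_rat (N : ℕ) : {r : ℚ | r.den ≤ N ∧ 0 ≤ r ∧ r ≤ 1}.Finite := by
  apply Set.Finite.of_finite_image (f := fun r : ℚ => (r.num, r.den))
  · apply Set.Finite.subset ((Finset.Icc (0:ℤ) (N:ℤ) ×ˢ Finset.Icc 1 N).finite_toSet)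
    rintro _ ⟨r, ⟨hden, h0, h1⟩, rfl⟩
    simp only [Finset.coe_product, Set.mem_prod, Finset.mem_coe, Finset.mem_Icc]
    have hden0 : (0:ℚ) < (r.den : ℚ) := by exact_mod_cast r.pos
    have hnum : (r.num : ℚ) = r * (r.den : ℚ) := by
      have := Rat.num_div_den r
      rw [div_eq_iff hden0.ne'] at this
      exact this
    have hnum_le : (r.num : ℚ) ≤ (N : ℚ) := by
      rw [hnum]
      calc r * (r.den:ℚ) ≤ 1 * (r.den:ℚ) := by
            exact mul_le_mul_of_nonneg_right h1 hden0.le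
        _ = (r.den:ℚ) := one_mul _
        _ ≤ (N:ℚ) := by exact_mod_cast hden
    refine ⟨⟨?_, ?_⟩, r.pos, hden⟩
    · exact Rat.num_nonneg.mpr h0
    · exact_mod_cast hnum_le
  · intro a _ c _ h
    exact Rat.ext (congrArg Prod.fst h) (congrArg Prod.snd h)

/-- The missing digit Cantor set `C_{b,W}`. -/
def missingDigitSet (b : ℕ) (W : Finset ℕ) : Set ℝ :=
  {x | ∃ w : ℕ → ℕ, (∀ j, w j ∈ W) ∧ x = ∑' j : ℕ, (w j : ℝ) / (b : ℝ) ^ (j + 1)}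

/-- for any finite set `S` of primes none of which divides `b`, only
finitely many rationals `r/s ∈ C_{b,W}` (in lowest terms) have all prime factors of
`s` in `S`. -/
theorem stmt_14 (b : ℕ) (hb : 3 ≤ b) (W : Finset ℕ)
    (hWsub : W ⊆ Finset.range b) (hW2 : 2 ≤ W.card) (hWne : W ≠ Finset.range b)
    (S : Finset ℕ) (hSp : ∀ p ∈ S, Nat.Prime p) (hSb : ∀ p ∈ S, ¬ p ∣ b) :
    {r : ℚ | (r : ℝ) ∈ missingDigitSet b W ∧
      ∀ p : ℕ, Nat.Prime p → p ∣ r.den → p ∈ S}.Finite := by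
  classical
  have hb2 : 2 ≤ b := by omega
  obtain ⟨A, hA0, hA⟩ := cc14_denom_le hb2 S hSp hSb
  have hWb : W.card ≤ b - 1 := by
    have hlt : W.card < b := by
      have hle : W.card ≤ b := by simpa using Finset.card_le_card hWsub
      rcases lt_or_eq_of_le hle with h | h
      · exact h
      · exact absurd (Finset.eq_of_subset_of_card_le hWsub (by simp [h])) hWne
    omega
  have hbR1 : (1:ℝ) < (b:ℝ) / ((b:ℝ) - 1) := by
    have hb1 : (1:ℝ) < b := by exact_mod_cast (by omega : 1 < b)
    rw [lt_div_iff₀ (by linarith)]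
    linarith
  obtain ⟨n₀, hn₀⟩ := pow_unbounded_of_one_lt ((A:ℝ) * ((b:ℝ) - 1)) hbR1
  apply Set.Finite.subset (cc14_finite_rat (b ^ (n₀ + 1)))
  rintro r ⟨⟨w, hwW, hx⟩, hden⟩
  have hw : ∀ j, w j ≤ b - 1 := by
    intro j
    have := Finset.mem_range.mp (hWsub (hwW j))
    omega
  have hr0 : (0:ℝ) ≤ (r:ℝ) := by rw [hx]; exact cc14_tsum_nonneg
  have hr1 : (r:ℝ) ≤ 1 := by rw [hx]; exact cc14_tsum_le_one hb2 hw
  have h0r : (0:ℚ) ≤ r := by exact_mod_cast hr0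
  have h1r : r ≤ 1 := by exact_mod_cast hr1
  refine ⟨?_, h0r, h1r⟩
  set s := r.den with hsdef
  by_cases hs2 : s < 2
  · have : 1 ≤ b ^ (n₀+1) := Nat.one_le_pow _ _ (by omega)
    omega
  push_neg at hs2
  haveI : NeZero s := ⟨by omega⟩
  have hcop : Nat.Coprime b s := by
    by_contra h
    obtain ⟨p, hp, hpd⟩ := Nat.exists_prime_and_dvd h
    exact hSb p (hden p hp (hpd.trans (Nat.gcd_dvd_right b s)))
      (hpd.trans (Nat.gcd_dvd_left b s))
  set u : (ZMod s)ˣ := ZMod.unitOfCoprime b hcop with hudef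
  have hub : ((u : (ZMod s)ˣ) : ZMod s) = (b : ZMod s) := ZMod.coe_unitOfCoprime b hcop
  set t := orderOf u with htdef
  have ht0 : 0 < t := orderOf_pos u
  have hbt : s ∣ b ^ t - 1 := by
    refine (cc14_dvd_iff (by omega) t).mpr ?_
    calc (b : ZMod s) ^ t = ((u ^ t : (ZMod s)ˣ) : ZMod s) := by
          rw [Units.val_pow_eq_pow_val, hub]
      _ = 1 := by rw [htdef, pow_orderOf_eq_one u, Units.val_one]
  set n := Nat.log b s + 1 with hndef
  have hsn : s < b ^ n := Nat.lt_pow_succ_log_self (by omega) s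
  have hsn' : b ^ (n - 1) ≤ s := by
    have := Nat.pow_log_le_self b (show s ≠ 0 by omega)
    rw [hndef, Nat.add_sub_cancel]; exact this
  -- the shifted tails
  set T : ℕ → ℝ := fun j => ∑' k : ℕ, (w (k + j) : ℝ) / (b : ℝ) ^ (k + 1) with hTdef
  have hT0 : ∀ j, 0 ≤ T j := fun j => cc14_tsum_nonneg
  have hT1 : ∀ j, T j ≤ 1 := fun j => cc14_tsum_le_one hb2 (fun k => hw _)
  have hsplit : ∀ j : ℕ, (r:ℝ) =
      (∑ k ∈ Finset.range j, (w k : ℝ) / (b : ℝ) ^ (k + 1)) + ((b:ℝ) ^ j)⁻¹ * T j := by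
    intro j
    rw [hx]
    exact cc14_split hb2 hw j
  have hbR0 : (b:ℝ) ≠ 0 := by exact_mod_cast (by omega : b ≠ 0)
  have hsR0 : (0:ℝ) < (s:ℝ) := by exact_mod_cast (by omega : 0 < s)
  -- integer numerators
  set M : ℕ → ℕ := fun j => ∑ k ∈ Finset.range j, w k * b ^ (j - k - 1) with hMdef
  have hM : ∀ j : ℕ, (M j : ℝ)
      = (b:ℝ) ^ j * ∑ k ∈ Finset.range j, (w k : ℝ) / (b : ℝ) ^ (k + 1) := by
    intro j
    rw [Finset.mul_sum, hMdef]
    push_cast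
    refine Finset.sum_congr rfl fun k hk => ?_
    have hkj : k < j := Finset.mem_range.mp hk
    have hsplitpow : (b:ℝ) ^ j = (b:ℝ) ^ (k+1) * (b:ℝ) ^ (j-k-1) := by
      rw [← pow_add]
      congr 1
      omega
    rw [hsplitpow]
    field_simp
  set a : ℕ → ℤ := fun j => (b:ℤ) ^ j * r.num - (M j : ℤ) * (s : ℤ) with hadef
  have hnumR : (r.num : ℝ) = (r:ℝ) * (s:ℝ) := by
    have h := Rat.num_div_den r
    have : ((r.num : ℚ) / (r.den : ℚ) : ℚ) = r := h
    have h2 : (r.num : ℚ) = r * (r.den : ℚ) := by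
      rw [div_eq_iff (by exact_mod_cast (by omega : r.den ≠ 0) : (r.den:ℚ) ≠ 0)] at this
      exact this
    calc (r.num : ℝ) = (((r.num : ℚ)) : ℝ) := by push_cast; ring
      _ = ((r * (r.den:ℚ) : ℚ) : ℝ) := by rw [h2]
      _ = (r:ℝ) * (s:ℝ) := by push_cast; rfl
  have haR : ∀ j : ℕ, (a j : ℝ) = (s:ℝ) * T j := by
    intro j
    have e1 : (b:ℝ) ^ j * (r:ℝ) = (M j : ℝ) + T j := by
      rw [hsplit j, mul_add, ← mul_assoc, mul_inv_cancel₀ (pow_ne_zero j hbR0), one_mul,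
        ← hM j]
    have : (a j : ℝ) = (b:ℝ)^j * (r.num : ℝ) - (M j : ℝ) * (s:ℝ) := by
      rw [hadef]
      push_cast
      ring
    rw [this, hnumR]
    calc (b:ℝ)^j * ((r:ℝ) * (s:ℝ)) - (M j:ℝ) * (s:ℝ)
        = ((b:ℝ)^j * (r:ℝ)) * (s:ℝ) - (M j:ℝ) * (s:ℝ) := by ring
      _ = ((M j : ℝ) + T j) * (s:ℝ) - (M j:ℝ) * (s:ℝ) := by rw [e1]
      _ = (s:ℝ) * T j := by ring
  -- injectivity key: equal a-values force equal indices
  have hkey : ∀ i j : ℕ, i ≤ j → j < t → a i = a j → i = j := by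
    intro i j hij hjt heq
    have hji : (b:ℤ) ^ i * (b:ℤ) ^ (j - i) = (b:ℤ) ^ j := by
      rw [← pow_add]
      congr 1
      omega
    have heq' : (b:ℤ)^i * r.num - (M i : ℤ) * s = (b:ℤ)^j * r.num - (M j : ℤ) * s := heq
    have hfact : (b:ℤ)^i * r.num * ((b:ℤ)^(j-i) - 1) = ((M j : ℤ) - (M i : ℤ)) * s := by
      linear_combination r.num * hji - heq'
    have hdvd : (s:ℤ) ∣ (b:ℤ)^i * r.num * ((b:ℤ)^(j-i) - 1) :=
      ⟨(M j : ℤ) - (M i : ℤ), by linear_combination hfact⟩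
    have hc1 : IsCoprime (s:ℤ) ((b:ℤ)^i * r.num) := by
      refine IsCoprime.mul_right ?_ ?_
      · exact (Nat.isCoprime_iff_coprime.mpr hcop.symm).pow_right
      · rw [Int.isCoprime_iff_gcd_eq_one]
        have : Int.gcd (s:ℤ) r.num = Nat.gcd s r.num.natAbs := by
          simp [Int.gcd]
        rw [this]
        exact Nat.Coprime.symm r.reduced
    have hdvd2 : (s:ℤ) ∣ (b:ℤ)^(j-i) - 1 := hc1.dvd_of_dvd_mul_left hdvd
    have h1le : 1 ≤ b ^ (j - i) := Nat.one_le_pow _ _ (by omega)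
    have hcast : ((b ^ (j-i) - 1 : ℕ) : ℤ) = (b:ℤ)^(j-i) - 1 := by
      push_cast [h1le]
      ring
    have hdvd3 : s ∣ b ^ (j-i) - 1 := by
      rw [← hcast] at hdvd2
      exact_mod_cast hdvd2
    have hpow1 : (b : ZMod s) ^ (j-i) = 1 := (cc14_dvd_iff (by omega) _).mp hdvd3
    have hut : u ^ (j-i) = 1 := by
      ext
      rw [Units.val_pow_eq_pow_val, hub, hpow1, Units.val_one]
    have hdv := orderOf_dvd_of_pow_eq_one hut
    rw [← htdef] at hdv
    have hz : j - i = 0 := by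
      by_contra hne
      exact absurd (Nat.le_of_dvd (Nat.pos_of_ne_zero hne) hdv) (by omega)
    omega
  -- prefix agreement forces equal a-values
  have hpre : ∀ i j : ℕ, (∀ k, k < n → w (k + i) = w (k + j)) → a i = a j := by
    intro i j hpre
    have hTsplit : ∀ m : ℕ, T m
        = (∑ k ∈ Finset.range n, (w (k + m) : ℝ) / (b : ℝ) ^ (k + 1))
          + ((b:ℝ) ^ n)⁻¹ * T (n + m) := by
      intro m
      have h := cc14_split hb2 (w := fun k => w (k + m)) (fun k => hw _) n
      rw [hTdef]
      simp only []
      rw [h]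
      congr 1
      congr 1
      refine tsum_congr fun k => ?_
      simp [add_assoc]
    have hsum_eq : (∑ k ∈ Finset.range n, (w (k + i) : ℝ) / (b : ℝ) ^ (k + 1))
        = ∑ k ∈ Finset.range n, (w (k + j) : ℝ) / (b : ℝ) ^ (k + 1) :=
      Finset.sum_congr rfl fun k hk => by rw [hpre k (Finset.mem_range.mp hk)]
    have hdiff : T i - T j = ((b:ℝ) ^ n)⁻¹ * (T (n + i) - T (n + j)) := by
      rw [hTsplit i, hTsplit j, hsum_eq]
      ring
    have habs : |T i - T j| ≤ ((b:ℝ) ^ n)⁻¹ := by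
      rw [hdiff, abs_mul, abs_of_pos (by positivity : (0:ℝ) < ((b:ℝ)^n)⁻¹)]
      have : |T (n + i) - T (n + j)| ≤ 1 := by
        rw [abs_le]
        constructor
        · have := hT0 (n + i); have := hT1 (n + j); linarith
        · have := hT1 (n + i); have := hT0 (n + j); linarith
      calc ((b:ℝ)^n)⁻¹ * |T (n + i) - T (n + j)| ≤ ((b:ℝ)^n)⁻¹ * 1 := by
            refine mul_le_mul_of_nonneg_left this (by positivity)
        _ = ((b:ℝ)^n)⁻¹ := mul_one _
    have habs2 : |((a i : ℝ)) - (a j : ℝ)| < 1 := by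
      rw [haR i, haR j, ← mul_sub, abs_mul, abs_of_pos hsR0]
      calc (s:ℝ) * |T i - T j| ≤ (s:ℝ) * ((b:ℝ)^n)⁻¹ :=
            mul_le_mul_of_nonneg_left habs hsR0.le
        _ < 1 := by
            rw [← div_eq_mul_inv, div_lt_one (by positivity)]
            exact_mod_cast hsn
    have habs3 : |a i - a j| < 1 := by
      have : |((a i - a j : ℤ) : ℝ)| < 1 := by push_cast; exact habs2
      exact_mod_cast this
    have := abs_lt.mp habs3
    omega
  -- counting : t ≤ W.card ^ n
  have hcount : t ≤ W.card ^ n := by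
    have hmaps : ∀ j ∈ Finset.range t,
        (fun k : Fin n => w (k + j)) ∈ Fintype.piFinset (fun _ : Fin n => W) := by
      intro j _
      exact Fintype.mem_piFinset.mpr fun k => hwW _
    have hinj : Set.InjOn (fun j => fun k : Fin n => w (k + j)) (Finset.range t) := by
      intro i hi j hj hfeq
      have hi' : i < t := Finset.mem_range.mp hi
      have hj' : j < t := Finset.mem_range.mp hj
      have hagree : ∀ k, k < n → w (k + i) = w (k + j) := by
        intro k hk
        exact congrFun hfeq ⟨k, hk⟩
      have := hpre i j hagree
      rcases le_total i j with h | h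
      · exact hkey i j h hj' this
      · exact (hkey j i h hi' this.symm).symm
    have := Finset.card_le_card_of_injOn _ hmaps hinj
    simpa using this
  -- arithmetic conclusion
  have h1 : s ≤ A * t := hA s t (by omega) (by omega) hden hbt
  have h4 : b ^ (n - 1) ≤ A * (b - 1) ^ n := by
    calc b ^ (n-1) ≤ s := hsn'
      _ ≤ A * t := h1
      _ ≤ A * (b-1) ^ n :=
          Nat.mul_le_mul_left A (le_trans hcount (Nat.pow_le_pow_left hWb n))
  have hnn0 : n ≤ n₀ := by
    by_contra hgt
    push_neg at hgt
    have hb1R : (0:ℝ) < (b:ℝ) - 1 := by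
      have : (1:ℝ) < b := by exact_mod_cast (by omega : 1 < b)
      linarith
    have h4R : (b:ℝ) ^ (n-1) ≤ (A:ℝ) * ((b:ℝ) - 1) ^ n := by
      have := h4
      have hc : ((b - 1 : ℕ) : ℝ) = (b:ℝ) - 1 := by
        push_cast [Nat.cast_sub (by omega : 1 ≤ b)]
        ring
      calc (b:ℝ) ^ (n-1) = ((b ^ (n-1) : ℕ) : ℝ) := by push_cast; ring
        _ ≤ ((A * (b-1)^n : ℕ) : ℝ) := by exact_mod_cast this
        _ = (A:ℝ) * ((b:ℝ) - 1) ^ n := by push_cast [hc]; ring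
    have hdivle : ((b:ℝ) / ((b:ℝ) - 1)) ^ (n-1) ≤ (A:ℝ) * ((b:ℝ) - 1) := by
      rw [div_pow, div_le_iff₀ (by positivity)]
      have hnsucc : n = (n - 1) + 1 := by omega
      calc (b:ℝ)^(n-1) ≤ (A:ℝ) * ((b:ℝ) - 1) ^ n := h4R
        _ = (A:ℝ) * ((b:ℝ) - 1) * ((b:ℝ) - 1)^(n-1) := by
            have hpow : ((b:ℝ)-1)^n = ((b:ℝ)-1)^(n-1) * ((b:ℝ)-1) := by
              have hn1 : n = n - 1 + 1 := by omega
              conv_lhs => rw [hn1]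
              rw [pow_succ]
            rw [hpow]
            ring
    have hmono : ((b:ℝ) / ((b:ℝ) - 1)) ^ n₀ ≤ ((b:ℝ) / ((b:ℝ) - 1)) ^ (n-1) :=
      pow_le_pow_right₀ hbR1.le (by omega)
    linarith
  calc s ≤ b ^ n := hsn.le
    _ ≤ b ^ (n₀ + 1) := Nat.pow_le_pow_right (by omega) (by omega)
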